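/- Let K ⊂ R^n be a symmetric convex body of volume 1. Then the function f(s) = Pr[x + s·y ∈ K], where x is uniform on K and y is a standard Gaussian N(0, I_n/n) independent of x, is non-increasing in s on [0, ∞). -/

import Mathlib

open MeasureTheory ProbabilityTheory

/-- For a symmetric convex body `K ⊂ ℝ^n` of volume `1`, the function
`f(s) = Pr[x + s·y ∈ K]`, with `x` uniform on `K` and `y ~ N(0, I_n/n)` independent,
is non-increasing on `[0, ∞)`. -/
theorem stmt3 (n : ℕ) (hn : 0 < n) (K : Set (EuclideanSpace ℝ (Fin n)))
    (hconv : Convex ℝ K) (hcomp : IsCompact K) (hint : (interior K).Nonempty)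
    (hsym : K = -K) (hvol : volume K = 1)
    (γ : Measure (EuclideanSpace ℝ (Fin n)))
    (hγ : γ = ((Measure.pi fun _ : Fin n => gaussianReal 0 (n : NNReal)⁻¹).map
      (MeasurableEquiv.toLp 2 (Fin n → ℝ)) :
      Measure (EuclideanSpace ℝ (Fin n)))) :
    AntitoneOn
      (fun s : ℝ =>
        (((volume.restrict K).prod γ)
          {p : EuclideanSpace ℝ (Fin n) × EuclideanSpace ℝ (Fin n) |
            p.1 + s • p.2 ∈ K}).toReal)
      (Set.Ici 0) := by
  subst hγ
  set γ := ((Measure.pi fun _ : Fin n => gaussianReal 0 (n : NNReal)⁻¹).map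
      (MeasurableEquiv.toLp 2 (Fin n → ℝ)) :
      Measure (EuclideanSpace ℝ (Fin n))) with hγ
  have hKm : MeasurableSet K := hcomp.isClosed.measurableSet
  have hfin : IsFiniteMeasure (volume.restrict K) := by
    constructor
    rw [Measure.restrict_apply_univ, hvol]
    exact ENNReal.one_lt_top
  intro s hs t ht hst
  simp only [Set.mem_Ici] at hs ht
  set μ := (volume.restrict K).prod γ with hμ
  have hmeasf : ∀ c : ℝ, Measurable (fun p : EuclideanSpace ℝ (Fin n) × EuclideanSpace ℝ (Fin n)
      => p.1 + c • p.2) := fun c => measurable_fst.add (measurable_snd.const_smul c)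
  have hmeas : ∀ c : ℝ, MeasurableSet {p : EuclideanSpace ℝ (Fin n) × EuclideanSpace ℝ (Fin n) |
      p.1 + c • p.2 ∈ K} := fun c => (hmeasf c) hKm
  -- key slice inequality
  have key : ∀ y : EuclideanSpace ℝ (Fin n),
      (volume.restrict K) {x | x + t • y ∈ K} ≤ (volume.restrict K) {x | x + s • y ∈ K} := by
    intro y
    have hm : ∀ c : ℝ, MeasurableSet {x : EuclideanSpace ℝ (Fin n) | x + c • y ∈ K} := by
      intro c
      exact (measurable_id.add_const (c • y)) hKm
    rw [Measure.restrict_apply (hm t), Measure.restrict_apply (hm s)]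
    set v : EuclideanSpace ℝ (Fin n) := ((t - s) / 2) • y with hv
    have hsub : {x : EuclideanSpace ℝ (Fin n) | x + t • y ∈ K} ∩ K ⊆
        (fun x => x + v) ⁻¹' ({x : EuclideanSpace ℝ (Fin n) | x + s • y ∈ K} ∩ K) := by
      rcases eq_or_lt_of_le ht with h0 | h0
      · have hs0 : s = 0 := le_antisymm (h0 ▸ hst) hs
        have ht0 : t = 0 := h0.symm
        intro x hx
        simp only [Set.mem_preimage, Set.mem_inter_iff, Set.mem_setOf_eq, hv, hs0, ht0] at *
        simpa using hx
      · intro x hx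
        obtain ⟨hx1, hx2⟩ := hx
        simp only [Set.mem_setOf_eq] at hx1
        have hxty : x + t • y ∈ K := hx1
        constructor
        · -- x + v + s • y ∈ K
          have hl : (t + s) / (2 * t) ∈ Set.Icc (0:ℝ) 1 := by
            constructor
            · positivity
            · rw [div_le_one (by positivity)]; linarith
          have := hconv hx2 hxty (a := 1 - (t + s) / (2 * t)) (b := (t + s) / (2 * t))
            (by linarith [hl.2]) hl.1 (by ring)
          have heq : (1 - (t + s) / (2 * t)) • x + ((t + s) / (2 * t)) • (x + t • y)
              = (x + v) + s • y := by
            rw [hv]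
            rw [smul_add, smul_smul]
            have : (t + s) / (2 * t) * t = (t + s) / 2 := by
              field_simp
            rw [this]
            module
          rw [heq] at this
          exact this
        · -- x + v ∈ K
          have hl : (t - s) / (2 * t) ∈ Set.Icc (0:ℝ) 1 := by
            constructor
            · apply div_nonneg (by linarith) (by positivity)
            · rw [div_le_one (by positivity)]; linarith
          have := hconv hx2 hxty (a := 1 - (t - s) / (2 * t)) (b := (t - s) / (2 * t))
            (by linarith [hl.2]) hl.1 (by ring)
          have heq : (1 - (t - s) / (2 * t)) • x + ((t - s) / (2 * t)) • (x + t • y)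
              = x + v := by
            rw [hv]
            rw [smul_add, smul_smul]
            have : (t - s) / (2 * t) * t = (t - s) / 2 := by
              field_simp
            rw [this]
            module
          rw [heq] at this
          exact this
    calc volume ({x : EuclideanSpace ℝ (Fin n) | x + t • y ∈ K} ∩ K)
        ≤ volume ((fun x => x + v) ⁻¹' ({x : EuclideanSpace ℝ (Fin n) | x + s • y ∈ K} ∩ K)) :=
          measure_mono hsub
      _ = volume ({x : EuclideanSpace ℝ (Fin n) | x + s • y ∈ K} ∩ K) :=
          measure_preimage_add_right volume v _
  have hle : μ {p : EuclideanSpace ℝ (Fin n) × EuclideanSpace ℝ (Fin n) | p.1 + t • p.2 ∈ K}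
      ≤ μ {p : EuclideanSpace ℝ (Fin n) × EuclideanSpace ℝ (Fin n) | p.1 + s • p.2 ∈ K} := by
    have h1 := Measure.prod_apply_symm (μ := volume.restrict K) (ν := γ) (hmeas t)
    have h2 := Measure.prod_apply_symm (μ := volume.restrict K) (ν := γ) (hmeas s)
    rw [hμ, h1, h2]
    exact lintegral_mono fun y => key y
  exact ENNReal.toReal_mono (measure_ne_top μ _) hle
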